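/- Let k be a field of characteristic zero, let n ≥ 2 and 2 ≤ r ≤ n, and let p_1, …, p_r ∈ k^{n+1} be linearly independent vectors. Then the k-vector space of homogeneous polynomials Q of degree 2 in k[x_0, …, x_n] such that all first-order partial derivatives of Q vanish at each p_i has dimension binomial(n−r+2, 2); moreover binomial(n−r+2, 2) = binomial(n+2, 2) − r(n+1) + r(r−1)/2, so this dimension exceeds the expected count binomial(n+2, 2) − r(n+1) by exactly r(r−1)/2 > 0. (This is the speciality of the Alexander–Hirschowitz case (d, n, r) = (2, n, r) with 2 ≤ r ≤ n.) -/

import Mathlib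

open MvPolynomial

section AHhelpers

open Finsupp

variable {k : Type*} [Field k] {N : ℕ}

noncomputable def subst (M : Fin N → Fin N → k) :
    MvPolynomial (Fin N) k →ₐ[k] MvPolynomial (Fin N) k :=
  aeval (fun j => ∑ m, C (M j m) * X m)

lemma subst_subst (M M' : Fin N → Fin N → k) (Q : MvPolynomial (Fin N) k) :
    subst M (subst M' Q) = subst (fun j t => ∑ m, M' j m * M m t) Q := by
  show ((subst M).comp (subst M')) Q = _
  unfold subst
  rw [comp_aeval]
  have h : (fun i => (aeval fun j => ∑ m : Fin N, C (M j m) * X m)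
      (∑ m : Fin N, C (M' i m) * X m)) =
      (fun j => ∑ m : Fin N, C ((fun j t => ∑ m : Fin N, M' j m * M m t) j m) * X m) := by
    funext j
    simp only [map_sum, map_mul, aeval_C, aeval_X, Finset.mul_sum, Finset.sum_mul,
      MvPolynomial.algebraMap_eq]
    rw [Finset.sum_comm]
    exact Finset.sum_congr rfl fun t _ => Finset.sum_congr rfl fun m _ => by ring
  rw [h]

lemma subst_id (Q : MvPolynomial (Fin N) k) :
    subst (fun j t => if j = t then 1 else 0) Q = Q := by
  show (aeval fun j => ∑ m, C (if j = m then (1:k) else 0) * X m) Q = Q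
  have : (fun j : Fin N => ∑ m, (C (if j = m then (1:k) else 0)) * X m) = X := by
    funext j
    simp [apply_ite C, ite_mul]
  rw [this, aeval_X_left, AlgHom.id_apply]

lemma eval_subst (M : Fin N → Fin N → k) (v : Fin N → k) (Q : MvPolynomial (Fin N) k) :
    eval v (subst M Q) = eval (fun j => ∑ m, M j m * v m) Q := by
  unfold subst
  rw [aeval_def, eval, eval₂_comp_left (eval₂Hom (RingHom.id k) v)]
  · congr 1
    · ext a; simp
    · funext j; simp

lemma pderiv_subst (M : Fin N → Fin N → k) (j : Fin N) (Q : MvPolynomial (Fin N) k) :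
    pderiv j (subst M Q) = ∑ l, C (M l j) * subst M (pderiv l Q) := by
  induction Q using MvPolynomial.induction_on with
  | C a => simp [subst]
  | add p q hp hq =>
      simp only [map_add, hp, hq, Finset.sum_add_distrib, mul_add]
  | mul_X p s hp =>
      simp only [map_mul, pderiv_mul, hp]
      have hgs : subst M (X s) = ∑ m, C (M s m) * X m := by simp [subst]
      have hds : pderiv j (subst M (X s)) = C (M s j) := by
        rw [hgs]
        simp only [map_sum, map_mul]
        rw [Finset.sum_eq_single j]
        · simp [pderiv_X_self, pderiv_C]
        · intro b _ hb
          simp [pderiv_X_of_ne hb.symm, Pi.single_eq_of_ne hb]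
        · simp
      rw [hds]
      have : ∀ l, pderiv l (p * X s) = pderiv l p * X s + p * (if s = l then 1 else 0) := by
        intro l
        rw [pderiv_mul]
        congr 1
        by_cases h : s = l
        · subst h; simp [pderiv_X_self]
        · simp [pderiv_X_of_ne h, h]
      simp only [this, map_add, map_mul, mul_add, Finset.sum_add_distrib]
      congr 1
      · rw [Finset.sum_mul]
        exact Finset.sum_congr rfl fun l _ => by ring
      · rw [Finset.sum_eq_single s]
        · simp [mul_comm]
        · intro b _ hb
          simp [Pi.single_eq_of_ne (Ne.symm hb), if_neg (fun h : s = b => hb h.symm)]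
        · simp

lemma isHomogeneous_subst {M : Fin N → Fin N → k} {Q : MvPolynomial (Fin N) k} {d : ℕ}
    (hQ : Q.IsHomogeneous d) : (subst M Q).IsHomogeneous d := by
  have := hQ.aeval (g := fun j => ∑ m, C (M j m) * X m) (n := 1) ?_
  · simpa [subst] using this
  · intro i
    apply IsHomogeneous.sum
    intro m _
    simpa using (isHomogeneous_X k m).C_mul (M i m)

lemma degree_one_structure (m : Fin N →₀ ℕ) (hm : m.degree = 1) :
    ∃ t, m = Finsupp.single t 1 := by
  have hne : m ≠ 0 := by
    intro h; rw [h] at hm; simp [map_zero] at hm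
  obtain ⟨t, ht⟩ := Finsupp.ne_iff.mp hne
  simp only [Finsupp.coe_zero, Pi.zero_apply] at ht
  refine ⟨t, ?_⟩
  have h1 : m t ≤ 1 := hm ▸ Finsupp.le_degree t m
  have h2 : 1 ≤ m t := Nat.one_le_iff_ne_zero.mpr ht
  have hmt : m t = 1 := le_antisymm h1 h2
  ext u
  rcases eq_or_ne u t with rfl | hu
  · simp [hmt]
  · rw [Finsupp.single_eq_of_ne' (Ne.symm hu)]
    by_contra h
    have hu1 : 1 ≤ m u := Nat.one_le_iff_ne_zero.mpr h
    have : 2 ≤ m.degree := by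
      have hsub : {t, u} ⊆ m.support := by
        intro x hx
        simp only [Finset.mem_insert, Finset.mem_singleton] at hx
        rcases hx with rfl | rfl <;> simp [Finsupp.mem_support_iff, ht, h]
      calc 2 ≤ ∑ x ∈ ({t, u} : Finset (Fin N)), m x := by
              rw [Finset.sum_pair (Ne.symm hu)]; omega
        _ ≤ ∑ x ∈ m.support, m x := Finset.sum_le_sum_of_subset hsub
        _ = m.degree := rfl
    omega

lemma degree_add' (a b : Fin N →₀ ℕ) : (a + b).degree = a.degree + b.degree := by
  simp only [Finsupp.degree_eq_weight_one]
  exact map_add _ a b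

lemma degree_single' (t : Fin N) (e : ℕ) : (Finsupp.single t e).degree = e := by
  rcases eq_or_ne e 0 with rfl | he
  · simp
  · exact Finsupp.degree_single t e

lemma eval_single_pderiv_monomial (c j : Fin N) (m : Fin N →₀ ℕ) (a : k)
    (hm : m.degree = 2) :
    eval (Pi.single c 1) (pderiv j (monomial m a)) =
      if m = Finsupp.single c 1 + Finsupp.single j 1 then (m j : k) * a else 0 := by
  rw [pderiv_monomial, eval_monomial]
  rcases Nat.eq_zero_or_pos (m j) with hj | hj
  · rcases eq_or_ne m (Finsupp.single c 1 + Finsupp.single j 1) with rfl | hne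
    · simp only [if_pos rfl, hj]
      push_cast
      ring
    · rw [if_neg hne, hj]
      push_cast
      ring
  · have hle : Finsupp.single j 1 ≤ m := by
      rw [Finsupp.single_le_iff]; exact hj
    set m' := m - Finsupp.single j 1 with hm'
    have hsum : m' + Finsupp.single j 1 = m := tsub_add_cancel_of_le hle
    have hdeg : m'.degree = 1 := by
      have := degree_add' m' (Finsupp.single j 1)
      rw [hsum, hm, degree_single'] at this
      omega
    obtain ⟨t, ht⟩ := degree_one_structure m' hdeg
    have hprod : (m'.prod fun n e => (Pi.single (M := fun _ : Fin N => k) c 1) n ^ e) =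
        if t = c then 1 else 0 := by
      rw [ht, Finsupp.prod_single_index (by simp)]
      rcases eq_or_ne t c with rfl | htc
      · simp
      · rw [if_neg htc, Pi.single_eq_of_ne htc, pow_one]
    rw [hprod]
    rcases eq_or_ne t c with rfl | htc
    · have hmeq : m = Finsupp.single t 1 + Finsupp.single j 1 := by rw [← hsum, ht]
      rw [if_pos rfl, if_pos hmeq]
      ring
    · rw [if_neg htc, if_neg, mul_zero]
      intro h
      apply htc
      have : m' = Finsupp.single c 1 := by
        have := hsum
        rw [h] at this
        exact add_right_cancel this
      rw [ht] at this
      have := DFunLike.congr_fun this t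
      simp only [Finsupp.single_eq_same] at this
      rw [Finsupp.single_apply] at this
      by_contra h2
      simp [Ne.symm h2] at this

lemma eval_single_pderiv (c j : Fin N) {Q : MvPolynomial (Fin N) k}
    (hQ : Q.IsHomogeneous 2) :
    eval (Pi.single (M := fun _ : Fin N => k) c 1) (pderiv j Q) =
      (((Finsupp.single c 1 + Finsupp.single j 1 : Fin N →₀ ℕ) j : ℕ) : k) *
        coeff (Finsupp.single c 1 + Finsupp.single j 1) Q := by
  set m0 : Fin N →₀ ℕ := Finsupp.single c 1 + Finsupp.single j 1 with hm0
  conv_lhs => rw [Q.as_sum]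
  rw [map_sum, map_sum]
  have hterm : ∀ m ∈ Q.support,
      eval (Pi.single (M := fun _ : Fin N => k) c 1) (pderiv j (monomial m (coeff m Q))) =
      if m = m0 then ((m j : ℕ) : k) * coeff m Q else 0 := by
    intro m hm
    have hdeg : m.degree = 2 := by
      by_contra h
      exact (MvPolynomial.mem_support_iff.mp hm) (hQ.coeff_eq_zero h)
    exact eval_single_pderiv_monomial c j m (coeff m Q) hdeg
  rw [Finset.sum_congr rfl hterm, Finset.sum_ite_eq' Q.support m0
    (fun m => ((m j : ℕ) : k) * coeff m Q)]
  split_ifs with h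
  · rfl
  · rw [MvPolynomial.notMem_support_iff.mp h, mul_zero]

lemma degree_two_structure (m : Fin N →₀ ℕ) (hm : m.degree = 2) :
    ∃ a b : Fin N, a ≤ b ∧ m = Finsupp.single a 1 + Finsupp.single b 1 := by
  have hne : m ≠ 0 := by
    intro h; rw [h] at hm; simp at hm
  obtain ⟨t, ht⟩ := Finsupp.ne_iff.mp hne
  simp only [Finsupp.coe_zero, Pi.zero_apply] at ht
  have hle : Finsupp.single t 1 ≤ m := by
    rw [Finsupp.single_le_iff]; omega
  set m' := m - Finsupp.single t 1 with hm'
  have hsum : m' + Finsupp.single t 1 = m := tsub_add_cancel_of_le hle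
  have hdeg : m'.degree = 1 := by
    have := degree_add' m' (Finsupp.single t 1)
    rw [hsum, hm, degree_single'] at this
    omega
  obtain ⟨u, hu⟩ := degree_one_structure m' hdeg
  have hmuv : m = Finsupp.single u 1 + Finsupp.single t 1 := by rw [← hsum, hu]
  rcases le_total u t with h | h
  · exact ⟨u, t, h, hmuv⟩
  · exact ⟨t, u, h, by rw [hmuv, add_comm]⟩

lemma pair_single_inj {a b c d : Fin N} (hab : a ≤ b) (hcd : c ≤ d)
    (h : Finsupp.single a 1 + Finsupp.single b 1
       = Finsupp.single c 1 + Finsupp.single d 1) :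
    a = c ∧ b = d := by
  have hx : ∀ x : Fin N, ((if a = x then 1 else 0) + (if b = x then 1 else 0) : ℕ)
      = (if c = x then 1 else 0) + (if d = x then 1 else 0) := by
    intro x
    have := DFunLike.congr_fun h x
    simpa [Finsupp.single_apply] using this
  rcases eq_or_ne a c with h1 | h1
  · subst h1
    refine ⟨rfl, ?_⟩
    have hb := hx b
    rcases eq_or_ne d b with h2 | h2
    · exact h2.symm
    · by_cases h3 : a = b <;> simp [h2, h3] at hb
  · exfalso
    have ha := hx a
    have hc := hx c
    have hda : d = a := by
      rcases eq_or_ne d a with h2 | h2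
      · exact h2
      · by_cases h3 : b = a <;> simp [Ne.symm h1, h2, h3] at ha
    have hbc : b = c := by
      rcases eq_or_ne b c with h2 | h2
      · exact h2
      · by_cases h3 : d = c <;> simp [h1, h2, h3] at hc
    apply h1
    have : c ≤ a := hda ▸ hcd
    have : a ≤ c := hbc ▸ hab
    omega

lemma aeval_eq_eval' (v : Fin N → k) (Q : MvPolynomial (Fin N) k) :
    aeval v Q = eval v Q := by
  rw [aeval_def, Algebra.algebraMap_self]; rfl

variable (k) in
noncomputable def stdMono {N : ℕ} (r : ℕ) (hrN : r ≤ N)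
    (q : {q : Fin (N - r) × Fin (N - r) // q.1 ≤ q.2}) : MvPolynomial (Fin N) k :=
  monomial (Finsupp.single (⟨r + q.1.1.val, by omega⟩ : Fin N) 1 +
            Finsupp.single (⟨r + q.1.2.val, by omega⟩ : Fin N) 1) 1

lemma coordinate_span [CharZero k] (r : ℕ) (hrN : r ≤ N) :
    (homogeneousSubmodule (Fin N) k 2 ⊓
      ⨅ (i : Fin r) (j : Fin N),
        LinearMap.ker ((aeval (Pi.single (M := fun _ : Fin N => k) (Fin.castLE hrN i) 1)).toLinearMap
          ∘ₗ (pderiv j).toLinearMap))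
    = Submodule.span k (Set.range (stdMono k r hrN)) := by
  have hmem : ∀ Q : MvPolynomial (Fin N) k,
      (Q ∈ homogeneousSubmodule (Fin N) k 2 ⊓
        ⨅ (i : Fin r) (j : Fin N),
          LinearMap.ker ((aeval (Pi.single (M := fun _ : Fin N => k) (Fin.castLE hrN i) 1)).toLinearMap
            ∘ₗ (pderiv j).toLinearMap)) ↔
      (Q.IsHomogeneous 2 ∧ ∀ (i : Fin r) (j : Fin N),
        eval (Pi.single (M := fun _ : Fin N => k) (Fin.castLE hrN i) 1) (pderiv j Q) = 0) := by
    intro Q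
    rw [Submodule.mem_inf, mem_homogeneousSubmodule]
    apply and_congr_right
    intro _
    rw [Submodule.mem_iInf]
    apply forall_congr'
    intro i
    rw [Submodule.mem_iInf]
    apply forall_congr'
    intro j
    rw [LinearMap.mem_ker, LinearMap.comp_apply, AlgHom.toLinearMap_apply,
      aeval_eq_eval']
    rfl
  apply le_antisymm
  · intro Q hQ
    rw [hmem] at hQ
    obtain ⟨hQ2, hQv⟩ := hQ
    have hcoeff : ∀ c j : Fin N, c.val < r →
        coeff (Finsupp.single c 1 + Finsupp.single j 1) Q = 0 := by
      intro c j hc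
      have hv := hQv ⟨c.val, hc⟩ j
      have hcast : Fin.castLE hrN ⟨c.val, hc⟩ = c := by ext; rfl
      rw [hcast, eval_single_pderiv c j hQ2] at hv
      have hmul : (((Finsupp.single c 1 + Finsupp.single j 1 : Fin N →₀ ℕ) j : ℕ) : k) ≠ 0 := by
        have h1 : 1 ≤ (Finsupp.single c 1 + Finsupp.single j 1 : Fin N →₀ ℕ) j := by
          simp [Finsupp.single_apply]
        exact Nat.cast_ne_zero.mpr (by omega)
      exact (mul_eq_zero.mp hv).resolve_left hmul
    nth_rewrite 1 [Q.as_sum]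
    apply Submodule.sum_mem
    intro m hm
    have hdeg : m.degree = 2 := by
      by_contra h
      exact (MvPolynomial.mem_support_iff.mp hm) (hQ2.coeff_eq_zero h)
    obtain ⟨a, b, hab, hmab⟩ := degree_two_structure m hdeg
    have hab' : a.val ≤ b.val := hab
    have hra : r ≤ a.val := by
      by_contra h
      push_neg at h
      have h0 := hcoeff a b h
      rw [← hmab] at h0
      exact (MvPolynomial.mem_support_iff.mp hm) h0
    have hrb : r ≤ b.val := le_trans hra hab'
    have hq : (⟨a.val - r, by omega⟩ : Fin (N - r)) ≤ ⟨b.val - r, by omega⟩ := by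
      show a.val - r ≤ b.val - r
      omega
    have hmono : stdMono k r hrN ⟨(⟨a.val - r, by omega⟩, ⟨b.val - r, by omega⟩), hq⟩ =
        monomial m 1 := by
      have h1 : (⟨r + (a.val - r), by omega⟩ : Fin N) = a := by ext; simp; omega
      have h2 : (⟨r + (b.val - r), by omega⟩ : Fin N) = b := by ext; simp; omega
      rw [stdMono]
      simp only [h1, h2]
      rw [hmab]
    have hsm : monomial m (coeff m Q) = coeff m Q • monomial m 1 := by
      rw [smul_monomial, smul_eq_mul, mul_one]
    rw [hsm, ← hmono]
    exact Submodule.smul_mem _ _ (Submodule.subset_span ⟨_, rfl⟩)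
  · rw [Submodule.span_le]
    rintro _ ⟨q, rfl⟩
    rw [SetLike.mem_coe, hmem]
    have hdeg : (Finsupp.single (⟨r + q.1.1.val, by omega⟩ : Fin N) 1 +
        Finsupp.single (⟨r + q.1.2.val, by omega⟩ : Fin N) 1).degree = 2 := by
      rw [degree_add', degree_single', degree_single']
    constructor
    · exact isHomogeneous_monomial 1 hdeg
    · intro i j
      rw [stdMono, eval_single_pderiv_monomial _ _ _ _ hdeg, if_neg]
      · intro h
        have hc := DFunLike.congr_fun h (Fin.castLE hrN i)
        have hlt : (Fin.castLE hrN i).val < r := i.isLt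
        simp only [Finsupp.add_apply, Finsupp.single_apply] at hc
        have h1 : ((⟨r + q.1.1.val, by omega⟩ : Fin N) = Fin.castLE hrN i) → False := by
          intro he
          have := congrArg Fin.val he
          simp at this
          omega
        have h2 : ((⟨r + q.1.2.val, by omega⟩ : Fin N) = Fin.castLE hrN i) → False := by
          intro he
          have := congrArg Fin.val he
          simp at this
          omega
        rw [if_neg h1, if_neg h2] at hc
        split_ifs at hc

lemma stdMono_injective_index (r : ℕ) (hrN : r ≤ N) :
    Function.Injective (fun q : {q : Fin (N - r) × Fin (N - r) // q.1 ≤ q.2} =>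
      (Finsupp.single (⟨r + q.1.1.val, by omega⟩ : Fin N) 1 +
       Finsupp.single (⟨r + q.1.2.val, by omega⟩ : Fin N) 1)) := by
  rintro ⟨⟨a, b⟩, hab⟩ ⟨⟨c, d⟩, hcd⟩ h
  simp only at h
  have hab' : (⟨r + a.val, by omega⟩ : Fin N) ≤ ⟨r + b.val, by omega⟩ := by
    show r + a.val ≤ r + b.val
    have : a.val ≤ b.val := hab
    omega
  have hcd' : (⟨r + c.val, by omega⟩ : Fin N) ≤ ⟨r + d.val, by omega⟩ := by
    show r + c.val ≤ r + d.val
    have : c.val ≤ d.val := hcd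
    omega
  obtain ⟨h1, h2⟩ := pair_single_inj hab' hcd' h
  have e1 : a = c := by
    have := congrArg Fin.val h1; simp at this; exact Fin.ext (by omega)
  have e2 : b = d := by
    have := congrArg Fin.val h2; simp at this; exact Fin.ext (by omega)
  subst e1; subst e2; rfl

lemma stdMono_linearIndependent (r : ℕ) (hrN : r ≤ N) :
    LinearIndependent k (stdMono k r hrN) := by
  have := (basisMonomials (Fin N) k).linearIndependent.comp _
    (stdMono_injective_index r hrN)
  exact this

lemma finrank_span_stdMono (r : ℕ) (hrN : r ≤ N) :
    Module.finrank k (Submodule.span k (Set.range (stdMono k r hrN))) =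
      Nat.choose (N - r + 1) 2 := by
  rw [finrank_span_eq_card (stdMono_linearIndependent r hrN)]
  rw [Fintype.card_congr (Sym2.sortEquiv (α := Fin (N - r))).symm, Sym2.card]
  simp

lemma exists_extending_basis {r D : ℕ} (hrD : r ≤ D)
    (p : Fin r → (Fin D → k)) (hp : LinearIndependent k p) :
    ∃ b : Module.Basis (Fin D) k (Fin D → k), ∀ i, b (Fin.castLE hrD i) = p i := by
  set U : Submodule k (Fin D → k) := Submodule.span k (Set.range p) with hU
  obtain ⟨W, hW⟩ := U.exists_isCompl
  have hD : Module.finrank k (Fin D → k) = D := Module.finrank_fin_fun k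
  have hUr : Module.finrank k U = r := by
    rw [finrank_span_eq_card hp, Fintype.card_fin]
  have hWr : Module.finrank k W = D - r := by
    have := Submodule.finrank_add_eq_of_isCompl hW
    rw [hUr, hD] at this
    omega
  let w : Module.Basis (Fin (D - r)) k W := Module.finBasisOfFinrankEq k W hWr
  set q : Fin r ⊕ Fin (D - r) → (Fin D → k) := Sum.elim p (W.subtype ∘ w) with hq
  have hwind : LinearIndependent k (W.subtype ∘ w) :=
    (w.linearIndependent.map' W.subtype W.ker_subtype)
  have hspanw : Submodule.span k (Set.range (W.subtype ∘ w)) ≤ W := by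
    rw [Submodule.span_le]
    rintro _ ⟨i, rfl⟩
    exact (w i).2
  have hqind : LinearIndependent k q :=
    hp.sum_type hwind (hW.disjoint.mono_right hspanw)
  have hcard : Fintype.card (Fin r ⊕ Fin (D - r)) = Module.finrank k (Fin D → k) := by
    simp [hD]
    omega
  have : Nonempty (Fin r ⊕ Fin (D - r)) ∨ D = 0 := by
    rcases Nat.eq_zero_or_pos D with h | h
    · right; exact h
    · left
      rcases Nat.eq_zero_or_pos r with h' | h'
      · exact ⟨Sum.inr ⟨0, by omega⟩⟩
      · exact ⟨Sum.inl ⟨0, h'⟩⟩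
  rcases this with hne | hD0
  · refine ⟨(basisOfLinearIndependentOfCardEqFinrank hqind hcard).reindex
      (finSumFinEquiv.trans (finCongr (by omega))), fun i => ?_⟩
    rw [Module.Basis.reindex_apply]
    have : (finSumFinEquiv.trans (finCongr (show r + (D - r) = D by omega))).symm
        (Fin.castLE hrD i) = Sum.inl i := by
      apply (finSumFinEquiv.trans (finCongr (show r + (D - r) = D by omega))).injective
      simp only [Equiv.apply_symm_apply]
      ext
      simp
    rw [this]
    have hco := congrFun (coe_basisOfLinearIndependentOfCardEqFinrank hqind hcard)
      (Sum.inl i)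
    rw [hco]
    rfl
  · subst hD0
    exact ⟨Pi.basisFun k (Fin 0), fun i =>
      (Nat.not_lt_zero _ (lt_of_lt_of_le i.isLt hrD)).elim⟩

lemma mem_quad_iff {r : ℕ} (v : Fin r → Fin N → k) (Q : MvPolynomial (Fin N) k) :
    (Q ∈ homogeneousSubmodule (Fin N) k 2 ⊓ ⨅ (i : Fin r) (j : Fin N),
      LinearMap.ker ((aeval (v i)).toLinearMap ∘ₗ (pderiv j).toLinearMap)) ↔
    (Q.IsHomogeneous 2 ∧ ∀ i j, eval (v i) (pderiv j Q) = 0) := by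
  rw [Submodule.mem_inf, mem_homogeneousSubmodule]
  apply and_congr_right
  intro _
  rw [Submodule.mem_iInf]
  apply forall_congr'
  intro i
  rw [Submodule.mem_iInf]
  apply forall_congr'
  intro j
  rw [LinearMap.mem_ker, LinearMap.comp_apply, AlgHom.toLinearMap_apply, aeval_eq_eval']
  rfl

lemma quadrics_finrank [CharZero k] {r : ℕ} (hrN : r ≤ N)
    (p : Fin r → (Fin N → k)) (hp : LinearIndependent k p) :
    Module.finrank k ↥(homogeneousSubmodule (Fin N) k 2 ⊓
      ⨅ (i : Fin r) (j : Fin N),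
        LinearMap.ker ((aeval (p i)).toLinearMap ∘ₗ (pderiv j).toLinearMap)) =
      Nat.choose (N - r + 1) 2 := by
  classical
  obtain ⟨b, hb⟩ := exists_extending_basis hrN p hp
  set M : Matrix (Fin N) (Fin N) k := (Pi.basisFun k (Fin N)).toMatrix b with hMdef
  haveI : Invertible M := (Pi.basisFun k (Fin N)).invertibleToMatrix b
  set Nm : Matrix (Fin N) (Fin N) k := ⅟M with hNmdef
  have hMb : ∀ j m, M j m = b m j := by
    intro j m
    rw [hMdef, Module.Basis.toMatrix_apply, Pi.basisFun_repr]
  have hMN : ∀ j t, ∑ m, M j m * Nm m t = if j = t then 1 else 0 := by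
    intro j t
    have h1 : (M * Nm) j t = (1 : Matrix (Fin N) (Fin N) k) j t := by
      rw [hNmdef, mul_invOf_self]
    rw [Matrix.mul_apply] at h1
    rw [h1, Matrix.one_apply]
  have hNM : ∀ j t, ∑ m, Nm j m * M m t = if j = t then 1 else 0 := by
    intro j t
    have h1 : (Nm * M) j t = (1 : Matrix (Fin N) (Fin N) k) j t := by
      rw [hNmdef, invOf_mul_self]
    rw [Matrix.mul_apply] at h1
    rw [h1, Matrix.one_apply]
  have hcomp1 : ∀ Q : MvPolynomial (Fin N) k,
      subst (fun j m => M j m) (subst (fun j m => Nm j m) Q) = Q := by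
    intro Q
    rw [subst_subst]
    have he : (fun j t => ∑ m, Nm j m * M m t) = (fun j t : Fin N => if j = t then (1:k) else 0) := by
      funext j t; exact hNM j t
    rw [he, subst_id]
  have hcomp2 : ∀ Q : MvPolynomial (Fin N) k,
      subst (fun j m => Nm j m) (subst (fun j m => M j m) Q) = Q := by
    intro Q
    rw [subst_subst]
    have he : (fun j t => ∑ m, M j m * Nm m t) = (fun j t : Fin N => if j = t then (1:k) else 0) := by
      funext j t; exact hMN j t
    rw [he, subst_id]
  -- evaluation transfer
  have hev : ∀ (Q : MvPolynomial (Fin N) k) (i : Fin r) (j : Fin N),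
      eval (Pi.single (M := fun _ : Fin N => k) (Fin.castLE hrN i) 1)
        (pderiv j (subst (fun a c => M a c) Q)) =
      ∑ l, M l j * eval (p i) (pderiv l Q) := by
    intro Q i j
    rw [pderiv_subst, map_sum]
    refine Finset.sum_congr rfl fun l _ => ?_
    rw [map_mul, eval_C, eval_subst]
    have hpt : (fun j' => ∑ m, M j' m *
        (Pi.single (M := fun _ : Fin N => k) (Fin.castLE hrN i) 1) m) = p i := by
      funext j'
      rw [Finset.sum_eq_single (Fin.castLE hrN i)]
      · rw [Pi.single_eq_same, mul_one, hMb, hb]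
      · intro m _ hm
        rw [Pi.single_eq_of_ne hm, mul_zero]
      · intro h
        exact absurd (Finset.mem_univ _) h
    rw [hpt]
  have evalkey : ∀ (Q : MvPolynomial (Fin N) k) (i : Fin r),
      (∀ j, eval (Pi.single (M := fun _ : Fin N => k) (Fin.castLE hrN i) 1)
        (pderiv j (subst (fun a c => M a c) Q)) = 0) ↔
      (∀ l, eval (p i) (pderiv l Q) = 0) := by
    intro Q i
    constructor
    · intro h l
      set w : Fin N → k := fun l => eval (p i) (pderiv l Q) with hw
      have hz : ∀ j, ∑ l', M l' j * w l' = 0 := by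
        intro j
        have := h j
        rw [hev Q i j] at this
        exact this
      have hwl : ∑ j, (∑ l', M l' j * w l') * Nm j l = w l := by
        have hstep : ∀ j, (∑ l', M l' j * w l') * Nm j l = ∑ l', M l' j * w l' * Nm j l :=
          fun j => Finset.sum_mul _ _ _
        rw [Finset.sum_congr rfl fun j _ => hstep j, Finset.sum_comm]
        have hinner : ∀ l', ∑ j, M l' j * w l' * Nm j l = w l' * (if l' = l then 1 else 0) := by
          intro l'
          calc ∑ j, M l' j * w l' * Nm j l = w l' * ∑ j, M l' j * Nm j l := by
                rw [Finset.mul_sum]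
                exact Finset.sum_congr rfl fun j _ => by ring
            _ = w l' * (if l' = l then 1 else 0) := by rw [hMN]
        rw [Finset.sum_congr rfl fun l' _ => hinner l']
        simp
      have : w l = ∑ j, (∑ l', M l' j * w l') * Nm j l := hwl.symm
      rw [hw] at this
      simp only [hz] at this
      simpa [show ∀ j, ∑ l', M l' j * eval (p i) (pderiv l' Q) = 0 from hz] using this
    · intro h j
      rw [hev Q i j]
      simp [h]
  -- the map of submodules
  set quadP : Submodule k (MvPolynomial (Fin N) k) :=
    homogeneousSubmodule (Fin N) k 2 ⊓
      ⨅ (i : Fin r) (j : Fin N),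
        LinearMap.ker ((aeval (p i)).toLinearMap ∘ₗ (pderiv j).toLinearMap) with hquadP
  set quadE : Submodule k (MvPolynomial (Fin N) k) :=
    homogeneousSubmodule (Fin N) k 2 ⊓
      ⨅ (i : Fin r) (j : Fin N),
        LinearMap.ker ((aeval (Pi.single (M := fun _ : Fin N => k) (Fin.castLE hrN i) 1)).toLinearMap
          ∘ₗ (pderiv j).toLinearMap) with hquadE
  have key : ∀ Q, Q ∈ quadP ↔ subst (fun a c => M a c) Q ∈ quadE := by
    intro Q
    rw [hquadP, hquadE, mem_quad_iff, mem_quad_iff]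
    constructor
    · rintro ⟨h2, hcond⟩
      refine ⟨isHomogeneous_subst h2, fun i j => ?_⟩
      exact (evalkey Q i).mpr (hcond i) j
    · rintro ⟨h2, hcond⟩
      constructor
      · have := isHomogeneous_subst (M := fun a c => Nm a c) h2
        rwa [hcomp2 Q] at this
      · intro i j
        exact (evalkey Q i).mp (hcond i) j
  have hinj : Function.Injective (subst (k := k) (fun a c => M a c)).toLinearMap := by
    intro x y hxy
    have : subst (fun j m => Nm j m) (subst (fun j m => M j m) x)
         = subst (fun j m => Nm j m) (subst (fun j m => M j m) y) := by
      simp only [AlgHom.toLinearMap_apply] at hxy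
      rw [hxy]
    rwa [hcomp2, hcomp2] at this
  have hmap : Submodule.map (subst (k := k) (fun a c => M a c)).toLinearMap quadP = quadE := by
    apply le_antisymm
    · rintro _ ⟨Q, hQ, rfl⟩
      exact (key Q).mp hQ
    · intro Q' hQ'
      refine ⟨subst (fun a c => Nm a c) Q', ?_, ?_⟩
      · exact (key _).mpr (by rwa [hcomp1 Q'])
      · exact hcomp1 Q'
  have h1 : Module.finrank k quadP = Module.finrank k quadE := by
    rw [← hmap]
    exact (Submodule.equivMapOfInjective _ hinj quadP).finrank_eq
  rw [h1, hquadE, coordinate_span r hrN, finrank_span_stdMono r hrN]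

lemma two_mul_choose_two (m : ℕ) : 2 * Nat.choose m 2 = m * (m - 1) := by
  induction m with
  | zero => rfl
  | succ n ih =>
    rw [Nat.choose_succ_succ, Nat.mul_add, ih, Nat.choose_one_right]
    rcases n with _ | m
    · rfl
    · simp only [Nat.succ_sub_one]
      ring


end AHhelpers

/-- The space of homogeneous quadrics all of whose first-order partial derivatives
vanish at each of the given points. -/
noncomputable def quadricsSingularAtPoints (k : Type*) [Field k] (n r : ℕ)
    (p : Fin r → (Fin (n + 1) → k)) : Submodule k (MvPolynomial (Fin (n + 1)) k) :=
  homogeneousSubmodule (Fin (n + 1)) k 2 ⊓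
    ⨅ (i : Fin r) (j : Fin (n + 1)),
      LinearMap.ker ((aeval (p i)).toLinearMap ∘ₗ (pderiv j).toLinearMap)

theorem stmt0 (k : Type*) [Field k] [CharZero k] (n r : ℕ)
    (hn : 2 ≤ n) (hr : 2 ≤ r) (hrn : r ≤ n)
    (p : Fin r → (Fin (n + 1) → k)) (hp : LinearIndependent k p) :
    Module.finrank k (quadricsSingularAtPoints k n r p) = Nat.choose (n - r + 2) 2 ∧
    (Nat.choose (n - r + 2) 2 : ℤ) =
      Nat.choose (n + 2) 2 - r * (n + 1) + (r : ℤ) * (r - 1) / 2 ∧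
    0 < (r : ℤ) * (r - 1) / 2 := by
  have hc' : 2 * Nat.choose r 2 = r * (r - 1) := two_mul_choose_two r
  have hc : (2:ℤ) * (Nat.choose r 2 : ℤ) = (r:ℤ) * ((r:ℤ) - 1) := by
    have h1 : (1:ℕ) ≤ r := by omega
    have := congrArg (Nat.cast : ℕ → ℤ) hc'
    push_cast [Nat.cast_sub h1] at this
    exact_mod_cast this
  have hdiv : (r : ℤ) * ((r:ℤ) - 1) / 2 = (Nat.choose r 2 : ℤ) := by
    rw [show (r:ℤ) * ((r:ℤ) - 1) = 2 * (Nat.choose r 2 : ℤ) from hc.symm,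
      Int.mul_ediv_cancel_left _ two_ne_zero]
  refine ⟨?_, ?_, ?_⟩
  · have hq := quadrics_finrank (k := k) (N := n + 1) (r := r) (by omega) p hp
    rw [show n + 1 - r + 1 = n - r + 2 from by omega] at hq
    exact hq
  · obtain ⟨s, rfl⟩ : ∃ s, n = s + r := ⟨n - r, by omega⟩
    rw [hdiv]
    have hidx : s + r - r + 2 = s + 2 := by omega
    rw [hidx]
    have ha' : 2 * Nat.choose (s + 2) 2 = (s + 2) * (s + 1) := by
      have h := two_mul_choose_two (s + 2)
      have h2 : s + 2 - 1 = s + 1 := by omega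
      rw [h2] at h
      exact h
    have ha : (2:ℤ) * (Nat.choose (s + 2) 2 : ℤ) = ((s:ℤ) + 2) * ((s:ℤ) + 1) := by
      exact_mod_cast ha'
    have hb' : 2 * Nat.choose (s + r + 2) 2 = (s + r + 2) * (s + r + 1) := by
      have h := two_mul_choose_two (s + r + 2)
      have h2 : s + r + 2 - 1 = s + r + 1 := by omega
      rw [h2] at h
      exact h
    have hb : (2:ℤ) * (Nat.choose (s + r + 2) 2 : ℤ) = ((s:ℤ) + (r:ℤ) + 2) * ((s:ℤ) + (r:ℤ) + 1) := by
      exact_mod_cast hb'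
    have goal2 : 2 * (Nat.choose (s + 2) 2 : ℤ) =
        2 * (Nat.choose (s + r + 2) 2 : ℤ) - 2 * (r : ℤ) * ((s : ℤ) + (r : ℤ) + 1)
          + 2 * (Nat.choose r 2 : ℤ) := by
      linear_combination ha - hb - hc
    push_cast
    linarith [goal2]
  · rw [hdiv]
    exact_mod_cast Nat.choose_pos hr
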